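/- Let K be a finite extension of Q_p and let f, g ∈ K[x] be monic irreducible separable polynomials of degree n with roots α (of f) and β (of g) in a fixed algebraic closure. Then |f(β)| = |g(α)|, where |·| is the absolute value extending that of K. Consequently, d(f,g) := |f(β)| is well-defined. -/

import Mathlib

open Polynomial

section UniqueNorm

variable {p : ℕ} [Fact p.Prime]

/-- A multiplicative field norm on a `ℚ_[p]`-algebra extending the `p`-adic norm. -/
structure PadicAlgNorm (p : ℕ) [Fact p.Prime] (E : Type*) [Field E] [Algebra ℚ_[p] E] where
  toFun : E → ℝ
  nonneg : ∀ x, 0 ≤ toFun x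
  map_mul : ∀ x y, toFun (x * y) = toFun x * toFun y
  add_le : ∀ x y, toFun (x + y) ≤ toFun x + toFun y
  eq_zero_iff : ∀ x, toFun x = 0 ↔ x = 0
  algebraMap_eq : ∀ c : ℚ_[p], toFun (algebraMap ℚ_[p] E c) = ‖c‖

namespace PadicAlgNorm

variable {E : Type*} [Field E] [Algebra ℚ_[p] E] (ν : PadicAlgNorm p E)

lemma map_zero : ν.toFun 0 = 0 := (ν.eq_zero_iff 0).2 rfl

lemma map_one : ν.toFun 1 = 1 := by
  have h := ν.map_mul 1 1
  rw [one_mul] at h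
  have h1 : ν.toFun 1 ≠ 0 := fun h0 => one_ne_zero ((ν.eq_zero_iff 1).1 h0)
  have h2 : ν.toFun 1 * 1 = ν.toFun 1 * ν.toFun 1 := by linarith
  exact (mul_left_cancel₀ h1 h2).symm

lemma map_neg (x : E) : ν.toFun (-x) = ν.toFun x := by
  have hm : ν.toFun (-1) = 1 := by
    have h := ν.map_mul (-1) (-1)
    rw [neg_one_mul, neg_neg, ν.map_one] at h
    have h2 : (ν.toFun (-1) - 1) * (ν.toFun (-1) + 1) = 0 := by ring_nf; linarith
    rcases mul_eq_zero.1 h2 with h3 | h3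
    · linarith
    · nlinarith [ν.nonneg (-1)]
  calc ν.toFun (-x) = ν.toFun ((-1) * x) := by rw [neg_one_mul]
  _ = ν.toFun x := by rw [ν.map_mul, hm, one_mul]

lemma map_pow (x : E) (m : ℕ) : ν.toFun (x ^ m) = ν.toFun x ^ m := by
  induction m with
  | zero => simpa using ν.map_one
  | succ k ih => rw [pow_succ, pow_succ, ν.map_mul, ih]

/-- Type synonym carrying the normed structure of `ν`. -/
def Syn (_ν : PadicAlgNorm p E) : Type _ := E

instance : Field ν.Syn := inferInstanceAs (Field E)

noncomputable instance : NormedAddCommGroup ν.Syn :=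
  AddGroupNorm.toNormedAddCommGroup
    { toFun := fun x => ν.toFun x
      map_zero' := ν.map_zero
      add_le' := ν.add_le
      neg' := ν.map_neg
      eq_zero_of_map_eq_zero' := fun x hx => (ν.eq_zero_iff x).1 hx }

instance : Algebra ℚ_[p] ν.Syn := inferInstanceAs (Algebra ℚ_[p] E)

lemma norm_def (x : ν.Syn) : ‖x‖ = ν.toFun x := rfl

noncomputable instance : NormedSpace ℚ_[p] ν.Syn :=
  ⟨fun c x => by
    have h : ν.toFun (c • (show E from x)) ≤ ‖c‖ * ν.toFun (show E from x) := by
      rw [Algebra.smul_def, ν.map_mul, ν.algebraMap_eq]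
    exact h⟩

instance [FiniteDimensional ℚ_[p] E] : FiniteDimensional ℚ_[p] ν.Syn :=
  inferInstanceAs (FiniteDimensional ℚ_[p] E)

private lemma le_of_forall_pow_le {a b C : ℝ} (ha : 0 ≤ a) (hb : 0 ≤ b) (hC : 0 < C)
    (h : ∀ m : ℕ, a ^ (m + 1) ≤ C * b ^ (m + 1)) : a ≤ b := by
  by_contra hab
  push_neg at hab
  rcases eq_or_lt_of_le hb with hb0 | hb0
  · have h0 := h 0
    rw [← hb0] at h0 hab
    norm_num at h0
    linarith
  · have hq : 1 < a / b := (one_lt_div hb0).2 hab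
    obtain ⟨m, hm⟩ := pow_unbounded_of_one_lt C hq
    have h2 : (a / b) ^ (m + 1) ≤ C := by
      rw [div_pow, div_le_iff₀ (by positivity)]
      exact h m
    have h3 : (a / b) ^ m ≤ (a / b) ^ (m + 1) :=
      pow_le_pow_right₀ (le_of_lt hq) (Nat.le_succ m)
    linarith

theorem le (ν₁ ν₂ : PadicAlgNorm p E) [FiniteDimensional ℚ_[p] E] (x : E) :
    ν₁.toFun x ≤ ν₂.toFun x := by
  let L : ν₂.Syn →ₗ[ℚ_[p]] ν₁.Syn :=
    { toFun := fun x => (x : E)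
      map_add' := fun _ _ => rfl
      map_smul' := fun _ _ => rfl }
  have hc : Continuous L := L.continuous_of_finiteDimensional
  obtain ⟨C, hC, hb⟩ := (ContinuousLinearMap.mk L hc).bound
  apply le_of_forall_pow_le (ν₁.nonneg x) (ν₂.nonneg x) hC
  intro m
  have := hb (x ^ (m + 1) : E)
  change ν₁.toFun (x ^ (m + 1)) ≤ C * ν₂.toFun (x ^ (m + 1)) at this
  calc ν₁.toFun x ^ (m + 1) = ν₁.toFun (x ^ (m + 1)) := (ν₁.map_pow x _).symm
  _ ≤ C * ν₂.toFun (x ^ (m + 1)) := this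
  _ = C * ν₂.toFun x ^ (m + 1) := by rw [ν₂.map_pow]

theorem eq (ν₁ ν₂ : PadicAlgNorm p E) [FiniteDimensional ℚ_[p] E] (x : E) :
    ν₁.toFun x = ν₂.toFun x :=
  le_antisymm (ν₁.le ν₂ x) (ν₂.le ν₁ x)

end PadicAlgNorm

end UniqueNorm

/-- An additive valuation `v` (written additively, with `v 0 = ⊤`) on a field `Ω`,
extending the `p`-adic valuation of `ℚ_[p]` (scaled by the ramification index `e`),
taking integer values on an intermediate field `K` and normalized so that a
uniformizer `unif` of `K` has valuation `1`. -/
structure PadicSetup (p : ℕ) [Fact p.Prime] (K Ω : Type*) [Field K] [Field Ω]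
    [Algebra ℚ_[p] K] [Algebra ℚ_[p] Ω] [Algebra K Ω] [IsScalarTower ℚ_[p] K Ω] where
  v : Ω → WithTop ℚ
  v_top_iff : ∀ x : Ω, v x = ⊤ ↔ x = 0
  v_mul : ∀ x y : Ω, v (x * y) = v x + v y
  v_add : ∀ x y : Ω, min (v x) (v y) ≤ v (x + y)
  e : ℕ
  e_pos : 0 < e
  v_padic : ∀ x : ℚ_[p], x ≠ 0 →
    v (algebraMap ℚ_[p] Ω x) = (((e : ℤ) * x.valuation : ℤ) : ℚ)
  v_int : ∀ x : K, x ≠ 0 → ∃ m : ℤ, v (algebraMap K Ω x) = ((m : ℚ) : WithTop ℚ)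
  unif : K
  v_unif : v (algebraMap K Ω unif) = 1

variable {p : ℕ} [Fact p.Prime] {K Ω : Type*} [Field K] [Field Ω]
    [Algebra ℚ_[p] K] [Algebra ℚ_[p] Ω] [Algebra K Ω] [IsScalarTower ℚ_[p] K Ω]

/-- `f` is an Eisenstein polynomial of degree `n` over `K` (with respect to the
normalized valuation of `K`): monic of degree `n`, all lower coefficients have
valuation at least `1`, and the constant coefficient has valuation exactly `1`. -/
def PadicSetup.IsEisensteinOfDegree (S : PadicSetup p K Ω) (f : K[X]) (n : ℕ) : Prop :=
  f.Monic ∧ f.natDegree = n ∧ (∀ i < n, 1 ≤ S.v (algebraMap K Ω (f.coeff i))) ∧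
    S.v (algebraMap K Ω (f.coeff 0)) = 1

/-- The `i`-th coefficient of the ramification polynomial `ρ(x) = f(αx+α)/αⁿ` of `f`,
namely `ρ_i = ∑_{k=i}^n C(k,i) f_k α^{k-n}`. -/
noncomputable def PadicSetup.rho (S : PadicSetup p K Ω) (f : K[X]) (n : ℕ) (α : Ω)
    (i : ℕ) : Ω :=
  ∑ k ∈ Finset.Icc i n, (k.choose i : Ω) * algebraMap K Ω (f.coeff k) * α ^ ((k : ℤ) - (n : ℤ))

namespace PadicSetup

variable (S : PadicSetup p K Ω)

/-- The finite (rational) value of `S.v`, with junk value `0` at `0`. -/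
noncomputable def vq (x : Ω) : ℚ := WithTop.untopD 0 (S.v x)

lemma v_ne_top {x : Ω} (hx : x ≠ 0) : S.v x ≠ ⊤ := fun h => hx ((S.v_top_iff x).1 h)

lemma v_eq_vq {x : Ω} (hx : x ≠ 0) : S.v x = (S.vq x : WithTop ℚ) := by
  obtain ⟨a, ha⟩ := WithTop.ne_top_iff_exists.1 (S.v_ne_top hx)
  rw [← ha]
  simp [vq, ← ha]

lemma vq_mul {x y : Ω} (hx : x ≠ 0) (hy : y ≠ 0) : S.vq (x * y) = S.vq x + S.vq y := by
  have h := S.v_mul x y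
  rw [S.v_eq_vq (mul_ne_zero hx hy), S.v_eq_vq hx, S.v_eq_vq hy, ← WithTop.coe_add] at h
  exact_mod_cast h

lemma v_one : S.v 1 = ((0 : ℚ) : WithTop ℚ) := by
  have h := S.vq_mul (one_ne_zero (α := Ω)) one_ne_zero
  rw [one_mul] at h
  have h0 : S.vq 1 = 0 := by linarith
  rw [S.v_eq_vq (one_ne_zero (α := Ω)), h0]

lemma v_neg (x : Ω) : S.v (-x) = S.v x := by
  have hm : S.v (-1 : Ω) = ((0:ℚ) : WithTop ℚ) := by
    have h := S.vq_mul (neg_ne_zero.2 (one_ne_zero (α := Ω))) (neg_ne_zero.2 one_ne_zero)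
    rw [neg_one_mul, neg_neg] at h
    have h1 : S.vq (1 : Ω) = 0 := by
      have := S.v_one
      rw [S.v_eq_vq (one_ne_zero (α := Ω))] at this
      exact_mod_cast this
    rw [h1] at h
    have h0 : S.vq (-1 : Ω) = 0 := by linarith
    rw [S.v_eq_vq (neg_ne_zero.2 (one_ne_zero (α := Ω))), h0]
  calc S.v (-x) = S.v ((-1) * x) := by rw [neg_one_mul]
  _ = S.v x := by rw [S.v_mul, hm]; simp


open Classical in
/-- The multiplicative norm attached to `S.v`. -/
noncomputable def nrm (x : Ω) : ℝ :=
  if x = 0 then 0 else (p : ℝ) ^ (-(S.vq x : ℝ) / (S.e : ℝ))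

variable {S}

lemma p_pos : (0 : ℝ) < p := by
  have := (Fact.out : p.Prime).pos
  exact_mod_cast this

lemma p_one_lt : (1 : ℝ) < p := by
  have := (Fact.out : p.Prime).one_lt
  exact_mod_cast this

lemma nrm_zero : S.nrm 0 = 0 := by simp [nrm]

lemma nrm_pos {x : Ω} (hx : x ≠ 0) : 0 < S.nrm x := by
  rw [nrm, if_neg hx]
  exact Real.rpow_pos_of_pos (p_pos (p := p)) _

lemma nrm_nonneg (x : Ω) : 0 ≤ S.nrm x := by
  rcases eq_or_ne x 0 with h | h
  · simp [h, nrm_zero]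
  · exact le_of_lt (nrm_pos h)

lemma nrm_eq_zero_iff (x : Ω) : S.nrm x = 0 ↔ x = 0 := by
  rcases eq_or_ne x 0 with h | h
  · simp [h, nrm_zero]
  · exact ⟨fun h0 => absurd h0 (ne_of_gt (nrm_pos h)), fun h0 => absurd h0 h⟩

lemma nrm_mul (x y : Ω) : S.nrm (x * y) = S.nrm x * S.nrm y := by
  rcases eq_or_ne x 0 with hx | hx
  · simp [hx, nrm_zero]
  rcases eq_or_ne y 0 with hy | hy
  · simp [hy, nrm_zero]
  rw [nrm, nrm, nrm, if_neg hx, if_neg hy, if_neg (mul_ne_zero hx hy), S.vq_mul hx hy,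
    ← Real.rpow_add (p_pos (p := p))]
  congr 1
  push_cast
  ring

lemma nrm_one : S.nrm 1 = 1 := by
  have h := nrm_mul (S := S) 1 1
  rw [one_mul] at h
  have h1 : S.nrm 1 ≠ 0 := ne_of_gt (nrm_pos one_ne_zero)
  have h2 : S.nrm 1 * 1 = S.nrm 1 * S.nrm 1 := by linarith
  exact (mul_left_cancel₀ h1 h2).symm

lemma nrm_eq_of_v_eq {x y : Ω} (h : S.v x = S.v y) : S.nrm x = S.nrm y := by
  rcases eq_or_ne x 0 with hx | hx
  · have : S.v y = ⊤ := by rw [← h, (S.v_top_iff x).2 hx]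
    rw [hx, (S.v_top_iff y).1 this]
  · have hy : y ≠ 0 := fun h0 => S.v_ne_top hx (by rw [h, (S.v_top_iff y).2 h0])
    have hq : S.vq x = S.vq y := by
      rw [S.v_eq_vq hx, S.v_eq_vq hy] at h
      exact_mod_cast h
    rw [nrm, nrm, if_neg hx, if_neg hy, hq]

lemma nrm_neg (x : Ω) : S.nrm (-x) = S.nrm x := nrm_eq_of_v_eq (S.v_neg x)

lemma v_eq_of_nrm_eq {x y : Ω} (hx : x ≠ 0) (hy : y ≠ 0) (h : S.nrm x = S.nrm y) :
    S.v x = S.v y := by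
  rw [nrm, nrm, if_neg hx, if_neg hy] at h
  have he : (S.e : ℝ) ≠ 0 := by
    have := S.e_pos
    positivity
  have hexp : -(S.vq x : ℝ) / (S.e : ℝ) = -(S.vq y : ℝ) / (S.e : ℝ) := by
    have h1 := (Real.rpow_le_rpow_left_iff (x := (p:ℝ)) (p_one_lt (p := p))).1 h.le
    have h2 := (Real.rpow_le_rpow_left_iff (x := (p:ℝ)) (p_one_lt (p := p))).1 h.ge
    linarith
  have hq : S.vq x = S.vq y := by
    field_simp at hexp
    have h4 : (S.vq x : ℝ) = S.vq y := by linarith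
    exact_mod_cast h4
  rw [S.v_eq_vq hx, S.v_eq_vq hy, hq]

lemma nrm_add_le_max (x y : Ω) : S.nrm (x + y) ≤ max (S.nrm x) (S.nrm y) := by
  rcases eq_or_ne (x + y) 0 with hxy | hxy
  · rw [hxy, nrm_zero]
    exact le_max_of_le_left (nrm_nonneg x)
  rcases eq_or_ne x 0 with hx | hx
  · rw [hx, zero_add]; exact le_max_right _ _
  rcases eq_or_ne y 0 with hy | hy
  · rw [hy, add_zero]; exact le_max_left _ _
  have hmin := S.v_add x y
  rw [S.v_eq_vq hx, S.v_eq_vq hy, S.v_eq_vq hxy] at hmin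
  have hmin' : min (S.vq x) (S.vq y) ≤ S.vq (x + y) := by
    rcases le_total (S.vq x) (S.vq y) with hle | hle
    · rw [min_eq_left hle]
      rw [min_eq_left (by exact_mod_cast hle : (S.vq x : WithTop ℚ) ≤ S.vq y)] at hmin
      exact_mod_cast hmin
    · rw [min_eq_right hle]
      rw [min_eq_right (by exact_mod_cast hle : (S.vq y : WithTop ℚ) ≤ S.vq x)] at hmin
      exact_mod_cast hmin
  have hepos : (0 : ℝ) ≤ (S.e : ℝ) := by positivity
  rcases le_total (S.vq x) (S.vq y) with hle | hle
  · apply le_max_of_le_left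
    rw [nrm, nrm, if_neg hxy, if_neg hx]
    apply Real.rpow_le_rpow_of_exponent_le (le_of_lt (p_one_lt (p := p)))
    rw [min_eq_left hle] at hmin'
    have : (S.vq x : ℝ) ≤ (S.vq (x+y) : ℝ) := by exact_mod_cast hmin'
    apply div_le_div_of_nonneg_right ?_ hepos |>.trans_eq rfl
    · linarith
  · apply le_max_of_le_right
    rw [nrm, nrm, if_neg hxy, if_neg hy]
    apply Real.rpow_le_rpow_of_exponent_le (le_of_lt (p_one_lt (p := p)))
    rw [min_eq_right hle] at hmin'
    have : (S.vq y : ℝ) ≤ (S.vq (x+y) : ℝ) := by exact_mod_cast hmin'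
    apply div_le_div_of_nonneg_right ?_ hepos |>.trans_eq rfl
    · linarith

lemma nrm_add_le (x y : Ω) : S.nrm (x + y) ≤ S.nrm x + S.nrm y :=
  (nrm_add_le_max x y).trans (max_le_add_of_nonneg (nrm_nonneg x) (nrm_nonneg y))

lemma nrm_algebraMap (c : ℚ_[p]) : S.nrm (algebraMap ℚ_[p] Ω c) = ‖c‖ := by
  rcases eq_or_ne c 0 with hc | hc
  · simp [hc, nrm_zero]
  have hc' : algebraMap ℚ_[p] Ω c ≠ 0 := fun h =>
    hc ((_root_.map_eq_zero (algebraMap ℚ_[p] Ω)).1 h)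
  have hv := S.v_padic c hc
  have hq : S.vq (algebraMap ℚ_[p] Ω c) = ((S.e : ℤ) * c.valuation : ℤ) := by
    rw [S.v_eq_vq hc'] at hv
    exact_mod_cast hv
  rw [nrm, if_neg hc', hq, Padic.norm_eq_zpow_neg_valuation hc]
  have he : (S.e : ℝ) ≠ 0 := by
    have := S.e_pos; positivity
  rw [← Real.rpow_intCast (p : ℝ) (-c.valuation)]
  congr 1
  push_cast
  field_simp


lemma nrm_multiset_prod (M : Multiset Ω) : S.nrm M.prod = (M.map S.nrm).prod := by
  induction M using Multiset.induction with
  | empty => simpa using nrm_one (S := S)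
  | cons a M ih => simp [nrm_mul, ih]

set_option synthInstance.maxHeartbeats 1000000 in
set_option maxHeartbeats 2000000 in
/-- Elements of `Ω` with the same minimal polynomial over `ℚ_[p]` have the same valuation;
this is the uniqueness of the extension of a complete valuation. -/
theorem v_eq_of_minpoly_eq [FiniteDimensional ℚ_[p] K] [Algebra.IsAlgebraic K Ω]
    {x y : Ω} (hx : x ≠ 0) (hy : y ≠ 0)
    (h : minpoly ℚ_[p] x = minpoly ℚ_[p] y) : S.v x = S.v y := by
  haveI : Algebra.IsAlgebraic ℚ_[p] K := Algebra.IsAlgebraic.of_finite ℚ_[p] K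
  haveI : Algebra.IsAlgebraic ℚ_[p] Ω := Algebra.IsAlgebraic.trans ℚ_[p] K Ω
  have hxi : IsIntegral ℚ_[p] x := (Algebra.IsAlgebraic.isAlgebraic x).isIntegral
  have hirr := minpoly.irreducible hxi
  haveI : Fact (Irreducible (minpoly ℚ_[p] x)) := ⟨hirr⟩
  haveI : FiniteDimensional ℚ_[p] (AdjoinRoot (minpoly ℚ_[p] x)) :=
    PowerBasis.finite (AdjoinRoot.powerBasis (minpoly.ne_zero hxi))
  let ψ₁ : AdjoinRoot (minpoly ℚ_[p] x) →ₐ[ℚ_[p]] Ω :=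
    AdjoinRoot.liftAlgHom _ (Algebra.ofId ℚ_[p] Ω) x (minpoly.aeval ℚ_[p] x)
  let ψ₂ : AdjoinRoot (minpoly ℚ_[p] x) →ₐ[ℚ_[p]] Ω :=
    AdjoinRoot.liftAlgHom _ (Algebra.ofId ℚ_[p] Ω) y (by rw [h]; exact minpoly.aeval ℚ_[p] y)
  have inj₁ : Function.Injective ψ₁ := ψ₁.toRingHom.injective
  have inj₂ : Function.Injective ψ₂ := ψ₂.toRingHom.injective
  let ν₁ : PadicAlgNorm p (AdjoinRoot (minpoly ℚ_[p] x)) :=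
    { toFun := fun z => S.nrm (ψ₁ z)
      nonneg := fun z => nrm_nonneg _
      map_mul := fun a b => by rw [map_mul, nrm_mul]
      add_le := fun a b => by rw [map_add]; exact nrm_add_le _ _
      eq_zero_iff := fun z => by
        rw [nrm_eq_zero_iff]
        exact ⟨fun h0 => inj₁ (by rw [h0, map_zero]), fun h0 => by rw [h0, map_zero]⟩
      algebraMap_eq := fun c => by rw [AlgHom.commutes, nrm_algebraMap] }
  let ν₂ : PadicAlgNorm p (AdjoinRoot (minpoly ℚ_[p] x)) :=
    { toFun := fun z => S.nrm (ψ₂ z)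
      nonneg := fun z => nrm_nonneg _
      map_mul := fun a b => by rw [map_mul, nrm_mul]
      add_le := fun a b => by rw [map_add]; exact nrm_add_le _ _
      eq_zero_iff := fun z => by
        rw [nrm_eq_zero_iff]
        exact ⟨fun h0 => inj₂ (by rw [h0, map_zero]), fun h0 => by rw [h0, map_zero]⟩
      algebraMap_eq := fun c => by rw [AlgHom.commutes, nrm_algebraMap] }
  have hkey := PadicAlgNorm.eq ν₁ ν₂ (AdjoinRoot.root _)
  have hx' : ψ₁ (AdjoinRoot.root _) = x := AdjoinRoot.liftAlgHom_root _ _ _ _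
  have hy' : ψ₂ (AdjoinRoot.root _) = y := AdjoinRoot.liftAlgHom_root _ _ _ _
  have hnrm : S.nrm x = S.nrm y := by
    have : ν₁.toFun (AdjoinRoot.root _) = ν₂.toFun (AdjoinRoot.root _) := hkey
    simpa [ν₁, ν₂, hx', hy'] using this
  exact v_eq_of_nrm_eq hx hy hnrm

set_option synthInstance.maxHeartbeats 1000000 in
set_option maxHeartbeats 2000000 in
/-- Conjugate elements (roots of the same irreducible polynomial over `K`) give equal
valuations of any polynomial expression over `K`. -/
theorem v_aeval_conj [FiniteDimensional ℚ_[p] K] [Algebra.IsAlgebraic K Ω]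
    {f : K[X]} (hfirr : Irreducible f) {a b : Ω}
    (ha : aeval a f = 0) (hb : aeval b f = 0) (g : K[X])
    (hga : aeval a g ≠ 0) (hgb : aeval b g ≠ 0) :
    S.v (aeval a g) = S.v (aeval b g) := by
  haveI : Fact (Irreducible f) := ⟨hfirr⟩
  let σ₁ : AdjoinRoot f →ₐ[K] Ω := AdjoinRoot.liftAlgHom f (Algebra.ofId K Ω) a ha
  let σ₂ : AdjoinRoot f →ₐ[K] Ω := AdjoinRoot.liftAlgHom f (Algebra.ofId K Ω) b hb
  have h1 : σ₁ (aeval (AdjoinRoot.root f) g) = aeval a g := by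
    rw [← Polynomial.aeval_algHom_apply]
    exact congrArg (fun t => aeval t g) (AdjoinRoot.liftAlgHom_root _ _ _ _)
  have h2 : σ₂ (aeval (AdjoinRoot.root f) g) = aeval b g := by
    rw [← Polynomial.aeval_algHom_apply]
    exact congrArg (fun t => aeval t g) (AdjoinRoot.liftAlgHom_root _ _ _ _)
  have hm : minpoly ℚ_[p] (aeval a g) = minpoly ℚ_[p] (aeval b g) := by
    have e1 := minpoly.algHom_eq (σ₁.restrictScalars ℚ_[p])
      (σ₁.toRingHom.injective) (aeval (AdjoinRoot.root f) g)
    have e2 := minpoly.algHom_eq (σ₂.restrictScalars ℚ_[p])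
      (σ₂.toRingHom.injective) (aeval (AdjoinRoot.root f) g)
    have e1' : minpoly ℚ_[p] (σ₁ (aeval (AdjoinRoot.root f) g)) =
        minpoly ℚ_[p] (aeval (AdjoinRoot.root f) g) := e1
    have e2' : minpoly ℚ_[p] (σ₂ (aeval (AdjoinRoot.root f) g)) =
        minpoly ℚ_[p] (aeval (AdjoinRoot.root f) g) := e2
    rw [← h1, ← h2, e1', e2']
  exact S.v_eq_of_minpoly_eq hga hgb hm

lemma aeval_ne_zero_of_root_of_ne {f g : K[X]} (hfirr : Irreducible f) (hgirr : Irreducible g)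
    (hfm : f.Monic) (hgm : g.Monic) (hne : f ≠ g) {a : Ω} (ha : aeval a f = 0) :
    aeval a g ≠ 0 := fun h0 => hne (by
  have h1 : minpoly K a = f := (minpoly.eq_of_irreducible_of_monic hfirr ha hfm).symm
  have h2 : f ∣ g := h1 ▸ minpoly.dvd K a h0
  exact Polynomial.eq_of_monic_of_associated hfm hgm (hfirr.associated_of_dvd hgirr h2))

end PadicSetup

/-- For monic irreducible separable polynomials `f, g` of degree `n`
over `K` with roots `α` of `f` and `β` of `g` in an algebraic closure `Ω` of `K`,
one has `|f(β)| = |g(α)|`; additively, `v(f(β)) = v(g(α))`.  Hence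
`d(f,g) := |f(β)|` is well-defined. -/
theorem dist_of_irreducible_polynomials_well_defined
    [FiniteDimensional ℚ_[p] K] [IsAlgClosed Ω] [Algebra.IsAlgebraic K Ω]
    (S : PadicSetup p K Ω)
    (f g : K[X]) (n : ℕ) (hn : 0 < n)
    (hfm : f.Monic) (hfd : f.natDegree = n) (hfirr : Irreducible f) (hfsep : f.Separable)
    (hgm : g.Monic) (hgd : g.natDegree = n) (hgirr : Irreducible g) (hgsep : g.Separable)
    (α β : Ω) (hα : aeval α f = 0) (hβ : aeval β g = 0) :
    S.v (aeval β f) = S.v (aeval α g) := by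
  by_cases hfg : f = g
  · subst hfg
    rw [hβ, hα]
  · set F := f.map (algebraMap K Ω) with hF
    set G := g.map (algebraMap K Ω) with hG
    have hFm : F.Monic := hfm.map _
    have hGm : G.Monic := hgm.map _
    have hFsp : F.Splits :=
      IsAlgClosed.splits F
    have hGsp : G.Splits :=
      IsAlgClosed.splits G
    set A := F.roots with hA
    set B := G.roots with hB
    have hcardA : A.card = n := by
      have h1 := Polynomial.splits_iff_card_roots.1 hFsp
      rw [hF, hfm.natDegree_map, hfd] at h1
      exact h1
    have hcardB : B.card = n := by
      have h1 := Polynomial.splits_iff_card_roots.1 hGsp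
      rw [hG, hgm.natDegree_map, hgd] at h1
      exact h1
    have hFeq : F = (A.map fun a => X - C a).prod :=
      hFsp.eq_prod_roots_of_monic hFm
    have hGeq : G = (B.map fun b => X - C b).prod :=
      hGsp.eq_prod_roots_of_monic hGm
    have hevalF : ∀ x : Ω, aeval x f = (A.map fun a => x - a).prod := by
      intro x
      rw [Polynomial.aeval_def, ← Polynomial.eval_map, ← hF, hFeq,
        Polynomial.eval_multiset_prod, Multiset.map_map]
      simp
    have hevalG : ∀ x : Ω, aeval x g = (B.map fun b => x - b).prod := by
      intro x
      rw [Polynomial.aeval_def, ← Polynomial.eval_map, ← hG, hGeq,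
        Polynomial.eval_multiset_prod, Multiset.map_map]
      simp
    have hrootA : ∀ a ∈ A, aeval a f = 0 := by
      intro a haA
      have h1 := Polynomial.isRoot_of_mem_roots haA
      rwa [Polynomial.IsRoot, hF, Polynomial.eval_map, ← Polynomial.aeval_def] at h1
    have hrootB : ∀ b ∈ B, aeval b g = 0 := by
      intro b hbB
      have h1 := Polynomial.isRoot_of_mem_roots hbB
      rwa [Polynomial.IsRoot, hG, Polynomial.eval_map, ← Polynomial.aeval_def] at h1
    have hgA : ∀ a ∈ A, aeval a g ≠ 0 := fun a haA =>
      PadicSetup.aeval_ne_zero_of_root_of_ne (K := K) (Ω := Ω) hfirr hgirr hfm hgm hfg (hrootA a haA)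
    have hfB : ∀ b ∈ B, aeval b f ≠ 0 := fun b hbB =>
      PadicSetup.aeval_ne_zero_of_root_of_ne (K := K) (Ω := Ω) hgirr hfirr hgm hfm (Ne.symm hfg) (hrootB b hbB)
    have hfβ : aeval β f ≠ 0 :=
      PadicSetup.aeval_ne_zero_of_root_of_ne (K := K) (Ω := Ω) hgirr hfirr hgm hfm (Ne.symm hfg) hβ
    have hgα : aeval α g ≠ 0 :=
      PadicSetup.aeval_ne_zero_of_root_of_ne (K := K) (Ω := Ω) hfirr hgirr hfm hgm hfg hα
    have key : (B.map fun b => S.nrm (aeval b f)).prod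
        = (A.map fun a => S.nrm (aeval a g)).prod := by
      calc (B.map fun b => S.nrm (aeval b f)).prod
          = (B.map fun b => ((A.map fun a => S.nrm (b - a)).prod)).prod := by
            apply congrArg
            apply Multiset.map_congr rfl
            intro b _
            rw [hevalF b, PadicSetup.nrm_multiset_prod, Multiset.map_map]
            rfl
        _ = (A.map fun a => ((B.map fun b => S.nrm (b - a)).prod)).prod :=
            Multiset.prod_map_prod_map B A
        _ = (A.map fun a => S.nrm (aeval a g)).prod := by
            apply congrArg
            apply Multiset.map_congr rfl
            intro a _
            rw [hevalG a, PadicSetup.nrm_multiset_prod, Multiset.map_map]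
            apply congrArg
            apply Multiset.map_congr rfl
            intro b _
            show S.nrm (b - a) = S.nrm (a - b)
            rw [← neg_sub a b, PadicSetup.nrm_neg]
    have hBconst : (B.map fun b => S.nrm (aeval b f)).prod = S.nrm (aeval β f) ^ n := by
      have h1 : (B.map fun b => S.nrm (aeval b f)) = B.map (fun _ => S.nrm (aeval β f)) :=
        Multiset.map_congr rfl (fun b hb => PadicSetup.nrm_eq_of_v_eq
          (S.v_aeval_conj hgirr (hrootB b hb) hβ f (hfB b hb) hfβ))
      rw [h1, Multiset.map_const', Multiset.prod_replicate, hcardB]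
    have hAconst : (A.map fun a => S.nrm (aeval a g)).prod = S.nrm (aeval α g) ^ n := by
      have h1 : (A.map fun a => S.nrm (aeval a g)) = A.map (fun _ => S.nrm (aeval α g)) :=
        Multiset.map_congr rfl (fun a ha => PadicSetup.nrm_eq_of_v_eq
          (S.v_aeval_conj hfirr (hrootA a ha) hα g (hgA a ha) hgα))
      rw [h1, Multiset.map_const', Multiset.prod_replicate, hcardA]
    have hpow : S.nrm (aeval β f) ^ n = S.nrm (aeval α g) ^ n := by
      rw [← hBconst, key, hAconst]
    have hnrm : S.nrm (aeval β f) = S.nrm (aeval α g) := by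
      have h1 := PadicSetup.nrm_nonneg (S := S) (aeval β f)
      have h2 := PadicSetup.nrm_nonneg (S := S) (aeval α g)
      exact (pow_left_strictMonoOn₀ hn.ne').injOn h1 h2 hpow
    exact PadicSetup.v_eq_of_nrm_eq hfβ hgα hnrm
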